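/- arXiv:1612.06133 — 3 statements merged into one kernel-verified Lean document; each statement's English description precedes it below -/
import Mathlib

section
/- For every π ∈ ℝ^N one has Φ(π) ≤ Φ(π*), i.e. π* maximizes Φ over ℝ^N, and the maximum value equals Φ(π*) = p·β − (γ/(1−γ))·p σ_z Σ⁻¹ Γ + (γ/(2(1−γ)))·p σ_z σ_z^⊤ p^⊤ + (γ/(2(1−γ)))·Γ_z^⊤ (Σ^⊤Σ)⁻¹ Γ_z. (This is the first-order-condition derivation of the optimal feedback investment strategy and of the optimized Hamiltonian Φ*.) -/
open Matrix

private lemma dot_mulVec_sum {m n : Type*} [Fintype m] [Fintype n] (p : m → ℝ)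
    (M : Matrix m n ℝ) (v : n → ℝ) :
    p ⬝ᵥ (M *ᵥ v) = ∑ i, (∑ k, p k * M k i) * v i := by
  rw [Matrix.dotProduct_mulVec]
  simp [Matrix.vecMul, dotProduct]

private lemma quad_le (γ t c x : ℝ) (hγ0 : 0 < γ) (hγ1 : γ < 1) (ht : 0 < t) :
    γ * (c * x) - γ * (1 - γ) / 2 * ((t * t) * (x * x))
      ≤ γ / (2 * (1 - γ)) * (c * c / (t * t)) := by
  have h1 : (0:ℝ) < 1 - γ := by linarith
  have ht2 : (0:ℝ) < t * t := mul_pos ht ht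
  have key : γ / (2*(1-γ)) * (c*c/(t*t)) - (γ * (c * x) - γ*(1-γ)/2*((t*t)*(x*x)))
      = (γ*(1-γ)/2) * (t*t) * (x - c/((1-γ)*(t*t)))^2 := by
    field_simp
    ring
  nlinarith [sq_nonneg (x - c/((1-γ)*(t*t))), mul_pos (mul_pos hγ0 h1) ht2]

private lemma coord_val (γ t c y : ℝ) (h1 : (1:ℝ) - γ ≠ 0) (ht : t ≠ 0)
    (hy : y = 1/(1-γ) * ((t*t)⁻¹ * c)) :
    γ * (c * y) - γ * (1 - γ) / 2 * ((t * t) * (y * y))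
      = γ / (2 * (1 - γ)) * (c * c / (t * t)) := by
  subst hy
  field_simp
  ring

private lemma coord_le (γ t c x y : ℝ) (hγ0 : 0 < γ) (hγ1 : γ < 1) (ht : 0 < t)
    (hy : y = 1/(1-γ) * ((t*t)⁻¹ * c)) :
    γ * (c * x) - γ * (1 - γ) / 2 * ((t * t) * (x * x))
      ≤ γ * (c * y) - γ * (1 - γ) / 2 * ((t * t) * (y * y)) := by
  rw [coord_val γ t c y (by linarith) (ne_of_gt ht) hy]
  exact quad_le γ t c x hγ0 hγ1 ht

/-- First-order-condition derivation of the optimal feedback strategy `π*` and of the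
optimized Hamiltonian `Φ* = Φ(π*)`. -/
theorem stmt_6 (N K : ℕ) (hN : 1 ≤ N) (hK : 2 ≤ K)
    (γ : ℝ) (hγ : γ ∈ Set.Ioo (0:ℝ) 1)
    (ϑ : Fin N → ℝ) (hϑ : ∀ i, 0 < ϑ i)
    (σ : Matrix (Fin (K - 1)) (Fin N) ℝ)
    (p β : Fin (K - 1) → ℝ) (Γ : Fin N → ℝ)
    (z : Fin N → ℝ) (hz : ∀ i, z i = 0 ∨ z i = 1) :
    let S : Matrix (Fin N) (Fin N) ℝ := Matrix.diagonal ϑ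
    let zv : (Fin N → ℝ) → Fin N → ℝ := fun v i => (1 - z i) * v i
    let σz : Matrix (Fin (K - 1)) (Fin N) ℝ := Matrix.of fun k i => σ k i * (1 - z i)
    let Φ : (Fin N → ℝ) → ℝ := fun π =>
      p ⬝ᵥ (β + γ • ((σ * S.transpose) *ᵥ zv π)) - γ * (zv π ⬝ᵥ Γ)
        - (γ * (1 - γ) / 2) * (zv π ⬝ᵥ ((S.transpose * S) *ᵥ zv π))
    let πstar : Fin N → ℝ :=
      (1 / (1 - γ)) • zv ((S.transpose * S)⁻¹ *ᵥ (S *ᵥ (σ.transpose *ᵥ p) - Γ))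
    (∀ π : Fin N → ℝ, Φ π ≤ Φ πstar) ∧
    Φ πstar = p ⬝ᵥ β - (γ / (1 - γ)) * (p ⬝ᵥ ((σz * S⁻¹) *ᵥ Γ))
      + (γ / (2 * (1 - γ))) * (p ⬝ᵥ ((σz * σz.transpose) *ᵥ p))
      + (γ / (2 * (1 - γ))) * (zv Γ ⬝ᵥ ((S.transpose * S)⁻¹ *ᵥ zv Γ)) := by
  intro S zv σz Φ πstar
  obtain ⟨hγ0, hγ1⟩ := hγ
  have h1γ : (1:ℝ) - γ ≠ 0 := by linarith
  have hϑne : ∀ i, ϑ i ≠ 0 := fun i => ne_of_gt (hϑ i)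
  set u : Fin N → ℝ := fun i => ∑ k, p k * σ k i with hu
  -- matrix computations
  have hST : S.transpose = S := Matrix.diagonal_transpose ϑ
  have hSS : S.transpose * S = Matrix.diagonal (fun i => ϑ i * ϑ i) := by
    rw [hST]; exact Matrix.diagonal_mul_diagonal ϑ ϑ
  have hSSinv : (S.transpose * S)⁻¹ = Matrix.diagonal (fun i => (ϑ i * ϑ i)⁻¹) := by
    rw [hSS]
    apply Matrix.inv_eq_right_inv
    rw [Matrix.diagonal_mul_diagonal,
      show (fun i => ϑ i * ϑ i * (ϑ i * ϑ i)⁻¹) = fun _ : Fin N => (1:ℝ) from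
        funext fun i => mul_inv_cancel₀ (mul_ne_zero (hϑne i) (hϑne i)),
      Matrix.diagonal_one]
  have hSinv : S⁻¹ = Matrix.diagonal (fun i => (ϑ i)⁻¹) := by
    apply Matrix.inv_eq_right_inv
    rw [Matrix.diagonal_mul_diagonal,
      show (fun i => ϑ i * (ϑ i)⁻¹) = fun _ : Fin N => (1:ℝ) from
        funext fun i => mul_inv_cancel₀ (hϑne i),
      Matrix.diagonal_one]
  -- canonical form of πstar
  have hπstar : ∀ i, πstar i = 1/(1-γ) * ((1 - z i) *
      ((ϑ i * ϑ i)⁻¹ * (ϑ i * u i - Γ i))) := by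
    intro i
    show (1 / (1 - γ)) * ((1 - z i) *
        ((S.transpose * S)⁻¹ *ᵥ (S *ᵥ (σ.transpose *ᵥ p) - Γ)) i) = _
    rw [hSSinv, Matrix.mulVec_diagonal]
    congr 2
    rw [Pi.sub_apply, Matrix.mulVec_diagonal]
    congr 2
    simp only [Matrix.mulVec, dotProduct, Matrix.transpose_apply, hu]
    congr 1
    exact Finset.sum_congr rfl fun k _ => mul_comm _ _
  -- canonical form of Φ
  have hΦ : ∀ π : Fin N → ℝ, Φ π = p ⬝ᵥ β +
      ∑ i, (γ * ((ϑ i * u i - Γ i) * zv π i)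
        - γ * (1 - γ) / 2 * ((ϑ i * ϑ i) * (zv π i * zv π i))) := by
    intro π
    show p ⬝ᵥ (β + γ • ((σ * S.transpose) *ᵥ zv π)) - γ * (zv π ⬝ᵥ Γ)
        - (γ * (1 - γ) / 2) * (zv π ⬝ᵥ ((S.transpose * S) *ᵥ zv π)) = _
    have e1 : p ⬝ᵥ (β + γ • ((σ * S.transpose) *ᵥ zv π))
        = p ⬝ᵥ β + γ * ∑ i, (u i * ϑ i) * zv π i := by
      rw [dotProduct_add, dotProduct_smul, smul_eq_mul, dot_mulVec_sum]
      congr 1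
      congr 1
      apply Finset.sum_congr rfl
      intro i _
      congr 1
      rw [hST]
      simp only [S, Matrix.mul_diagonal, hu]
      rw [Finset.sum_mul]
      exact Finset.sum_congr rfl fun k _ => by ring
    have e2 : zv π ⬝ᵥ Γ = ∑ i, zv π i * Γ i := rfl
    have e3 : zv π ⬝ᵥ ((S.transpose * S) *ᵥ zv π)
        = ∑ i, zv π i * ((ϑ i * ϑ i) * zv π i) := by
      rw [hSS]
      show ∑ i, zv π i * ((Matrix.diagonal fun j => ϑ j * ϑ j) *ᵥ zv π) i = _
      exact Finset.sum_congr rfl fun i _ => by rw [Matrix.mulVec_diagonal]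
    rw [e1, e2, e3, Finset.mul_sum, Finset.mul_sum, Finset.mul_sum]
    rw [sub_sub, add_sub_assoc]
    congr 1
    rw [← Finset.sum_add_distrib, ← Finset.sum_sub_distrib]
    exact Finset.sum_congr rfl fun i _ => by ring
  have hzvstar : ∀ i, zv πstar i = πstar i := by
    intro i
    show (1 - z i) * πstar i = πstar i
    rcases hz i with h | h
    · rw [h]; ring
    · rw [hπstar i, h]; ring
  constructor
  · -- maximality
    intro π
    rw [hΦ π, hΦ πstar]
    apply add_le_add_right
    apply Finset.sum_le_sum
    intro i _
    rw [hzvstar i]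
    rcases hz i with h | h
    · exact coord_le γ (ϑ i) (ϑ i * u i - Γ i) (zv π i) (πstar i) hγ0 hγ1 (hϑ i)
        (by rw [hπstar i, h]; ring)
    · have hx : zv π i = 0 := by show (1 - z i) * π i = 0; rw [h]; ring
      have hy : πstar i = 0 := by rw [hπstar i, h]; ring
      rw [hx, hy]
  · -- value of the maximum
    have e4 : p ⬝ᵥ ((σz * S⁻¹) *ᵥ Γ)
        = ∑ i, (u i * ((1 - z i) * (ϑ i)⁻¹)) * Γ i := by
      rw [dot_mulVec_sum]
      apply Finset.sum_congr rfl
      intro i _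
      congr 1
      rw [hSinv]
      simp only [σz, Matrix.mul_diagonal, Matrix.of_apply, hu]
      rw [Finset.sum_mul]
      exact Finset.sum_congr rfl fun k _ => by ring
    have e5 : p ⬝ᵥ ((σz * σz.transpose) *ᵥ p)
        = ∑ i, ((1 - z i) * u i) * ((1 - z i) * u i) := by
      rw [← Matrix.mulVec_mulVec, dot_mulVec_sum]
      apply Finset.sum_congr rfl
      intro i _
      have h1 : (∑ k, p k * σz k i) = (1 - z i) * u i := by
        simp only [σz, Matrix.of_apply, hu]
        rw [Finset.mul_sum]
        exact Finset.sum_congr rfl fun k _ => by ring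
      have h2 : (σz.transpose *ᵥ p) i = (1 - z i) * u i := by
        simp only [σz, Matrix.mulVec, dotProduct, Matrix.transpose_apply,
          Matrix.of_apply, hu]
        rw [Finset.mul_sum]
        exact Finset.sum_congr rfl fun k _ => by ring
      rw [h1, h2]
    have e6 : zv Γ ⬝ᵥ ((S.transpose * S)⁻¹ *ᵥ zv Γ)
        = ∑ i, ((1 - z i) * Γ i) * ((ϑ i * ϑ i)⁻¹ * ((1 - z i) * Γ i)) := by
      rw [hSSinv]
      show ∑ i, zv Γ i * ((Matrix.diagonal fun j => (ϑ j * ϑ j)⁻¹) *ᵥ zv Γ) i = _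
      exact Finset.sum_congr rfl fun i _ => by rw [Matrix.mulVec_diagonal]
    rw [hΦ πstar, e4, e5, e6]
    have hre : ∀ X A B C : ℝ, X - γ/(1-γ) * A + γ/(2*(1-γ)) * B + γ/(2*(1-γ)) * C
        = X + (γ/(2*(1-γ)) * B + γ/(2*(1-γ)) * C - γ/(1-γ) * A) := by intros; ring
    rw [hre]
    congr 1
    rw [Finset.mul_sum, Finset.mul_sum, Finset.mul_sum, ← Finset.sum_add_distrib,
      ← Finset.sum_sub_distrib]
    apply Finset.sum_congr rfl
    intro i _
    rw [hzvstar i]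
    rcases hz i with h | h
    · rw [coord_val γ (ϑ i) (ϑ i * u i - Γ i) (πstar i) h1γ (hϑne i)
        (by rw [hπstar i, h]; ring), h]
      have htt : ϑ i * ϑ i ≠ 0 := mul_ne_zero (hϑne i) (hϑne i)
      have h2 : (1 - γ) * ϑ i ≠ 0 := mul_ne_zero h1γ (hϑne i)
      have hti : ϑ i ≠ 0 := hϑne i
      field_simp
      ring
    · rw [hπstar i, h]; ring
end

section
/- For every v ∈ ℝ, (d/dv)(ν''(v)/ν'(v)) + ν''(v) = −a k (a+1)·e^{−a k v}/(k⁻¹ + e^{−a k v})², and this quantity is strictly negative. (This identity produces the strictly negative coefficient of the quadratic gradient term in the key estimate of the uniqueness proof.) -/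
open Real

/-- The identity `(ν''/ν')' + ν'' = -ak(a+1)·e^{-akv}/(k⁻¹+e^{-akv})² < 0` for the
transformation `ν(v) = -(1/a)·log(k⁻¹ + e^{-akv})`. -/
theorem stmt_10 (a k : ℝ) (ha : 0 < a) (hk : 0 < k) :
    let ν : ℝ → ℝ := fun v => -(1 / a) * Real.log (k⁻¹ + Real.exp (-(a * k * v)))
    let g : ℝ → ℝ := fun v => deriv (deriv ν) v / deriv ν v
    ∀ v : ℝ,
      deriv g v + deriv (deriv ν) v
        = -(a * k * (a + 1)) * Real.exp (-(a * k * v))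
            / (k⁻¹ + Real.exp (-(a * k * v))) ^ 2 ∧
      deriv g v + deriv (deriv ν) v < 0 := by
  intro ν g v
  have ha0 : a ≠ 0 := ne_of_gt ha
  have hk0 : k ≠ 0 := ne_of_gt hk
  have hE : ∀ x : ℝ, 0 < Real.exp (-(a * k * x)) := fun x => Real.exp_pos _
  have hD : ∀ x : ℝ, 0 < k⁻¹ + Real.exp (-(a * k * x)) := fun x => by positivity
  -- derivative of D
  have hDder : ∀ x : ℝ, HasDerivAt (fun y => k⁻¹ + Real.exp (-(a * k * y)))
      (Real.exp (-(a * k * x)) * (-(a * k))) x := by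
    intro x
    have h1 : HasDerivAt (fun y : ℝ => -(a * k * y)) (-(a * k)) x := by
      simpa using ((hasDerivAt_id x).const_mul (-(a * k)))
    have h2 := (hasDerivAt_const x k⁻¹).add ((Real.hasDerivAt_exp _).comp x h1)
    exact h2.congr_deriv (by ring)
  -- first derivative of ν
  have hν' : ∀ x : ℝ, HasDerivAt ν
      (k * Real.exp (-(a * k * x)) / (k⁻¹ + Real.exp (-(a * k * x)))) x := by
    intro x
    have h4 := ((hDder x).log (ne_of_gt (hD x))).const_mul (-(1 / a))
    refine h4.congr_deriv ?_
    field_simp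
  have hdν : deriv ν = fun x => k * Real.exp (-(a * k * x)) / (k⁻¹ + Real.exp (-(a * k * x))) :=
    funext fun x => (hν' x).deriv
  -- second derivative
  have hν'' : ∀ x : ℝ, HasDerivAt (deriv ν)
      (-(a * k * Real.exp (-(a * k * x))) / (k⁻¹ + Real.exp (-(a * k * x))) ^ 2) x := by
    intro x
    rw [hdν]
    have hnum : HasDerivAt (fun y => k * Real.exp (-(a * k * y)))
        (k * (Real.exp (-(a * k * x)) * (-(a * k)))) x := by
      have h1 : HasDerivAt (fun y : ℝ => -(a * k * y)) (-(a * k)) x := by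
        simpa using ((hasDerivAt_id x).const_mul (-(a * k)))
      exact ((Real.hasDerivAt_exp _).comp x h1).const_mul k
    have h := hnum.div (hDder x) (ne_of_gt (hD x))
    refine h.congr_deriv ?_
    have hDne := ne_of_gt (hD x)
    field_simp
    ring
  have hddν : deriv (deriv ν)
      = fun x => -(a * k * Real.exp (-(a * k * x))) / (k⁻¹ + Real.exp (-(a * k * x))) ^ 2 :=
    funext fun x => (hν'' x).deriv
  -- g simplifies to -a / D
  have hg : g = fun x => -a / (k⁻¹ + Real.exp (-(a * k * x))) := by
    funext x
    show deriv (deriv ν) x / deriv ν x = _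
    rw [hddν, hdν]
    have hDne := ne_of_gt (hD x)
    have hEne := ne_of_gt (hE x)
    field_simp
  have hgder : HasDerivAt g
      (-(a * a * k * Real.exp (-(a * k * v))) / (k⁻¹ + Real.exp (-(a * k * v))) ^ 2) v := by
    rw [hg]
    have h := (hasDerivAt_const v (-a)).div (hDder v) (ne_of_gt (hD v))
    refine h.congr_deriv ?_
    field_simp
    ring
  have hgder' : deriv g v
      = -(a * a * k * Real.exp (-(a * k * v))) / (k⁻¹ + Real.exp (-(a * k * v))) ^ 2 :=
    hgder.deriv
  have key : deriv g v + deriv (deriv ν) v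
      = -(a * k * (a + 1)) * Real.exp (-(a * k * v))
          / (k⁻¹ + Real.exp (-(a * k * v))) ^ 2 := by
    rw [hgder', hddν]
    have hDne := ne_of_gt (hD v)
    beta_reduce
    field_simp
    ring
  refine ⟨key, ?_⟩
  rw [key]
  apply div_neg_of_neg_of_pos
  · have : 0 < a * k * (a + 1) * Real.exp (-(a * k * v)) := by positivity
    nlinarith
  · positivity
end

section
/- For every v ∈ ℝ and all x ≥ 0, y ≥ 0, one has (1/2)·[(d/dv)(ν''(v)/ν'(v)) + ν''(v)]·x + (γ/(2(1−γ)))·ν''(v)·y = −(a k·e^{−a k v}/(k⁻¹ + e^{−a k v})²)·[((a+1)/2)·x + (γ/(2(1−γ)))·y] ≤ 0, with strict inequality whenever x > 0 or y > 0. (This is the negativity of the solution-derivative of the transformed Hamiltonian's quadratic part, enabling the comparison argument in the uniqueness proof.) -/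
open Real

/-- Negativity of the solution-derivative of the transformed Hamiltonian's quadratic part:
`(1/2)·[(ν''/ν')' + ν'']·x + (γ/(2(1-γ)))·ν''·y` equals
`-(ak·e^{-akv}/(k⁻¹+e^{-akv})²)·[((a+1)/2)x + (γ/(2(1-γ)))y] ≤ 0`, strictly if `x>0` or `y>0`. -/
theorem stmt_11 (a k γ : ℝ) (ha : 0 < a) (hk : 0 < k) (hγ : γ ∈ Set.Ioo (0:ℝ) 1) :
    let ν : ℝ → ℝ := fun v => -(1 / a) * Real.log (k⁻¹ + Real.exp (-(a * k * v)))
    let g : ℝ → ℝ := fun v => deriv (deriv ν) v / deriv ν v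
    ∀ v x y : ℝ, 0 ≤ x → 0 ≤ y →
      ((1 / 2) * (deriv g v + deriv (deriv ν) v) * x
          + (γ / (2 * (1 - γ))) * deriv (deriv ν) v * y
        = -((a * k * Real.exp (-(a * k * v))) / (k⁻¹ + Real.exp (-(a * k * v))) ^ 2)
            * (((a + 1) / 2) * x + (γ / (2 * (1 - γ))) * y)) ∧
      ((1 / 2) * (deriv g v + deriv (deriv ν) v) * x
          + (γ / (2 * (1 - γ))) * deriv (deriv ν) v * y ≤ 0) ∧
      ((0 < x ∨ 0 < y) →
        (1 / 2) * (deriv g v + deriv (deriv ν) v) * x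
          + (γ / (2 * (1 - γ))) * deriv (deriv ν) v * y < 0) := by
  intro ν g v x y hx hy
  obtain ⟨hγ0, hγ1⟩ := hγ
  have hk' : (0:ℝ) < k⁻¹ := inv_pos.mpr hk
  have hEpos : ∀ w : ℝ, 0 < Real.exp (-(a * k * w)) := fun w => Real.exp_pos _
  have hD : ∀ w : ℝ, 0 < k⁻¹ + Real.exp (-(a * k * w)) := fun w => by positivity
  have hE' : ∀ w : ℝ, HasDerivAt (fun w : ℝ => Real.exp (-(a * k * w)))
      (-(a * k) * Real.exp (-(a * k * w))) w := by
    intro w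
    have h : HasDerivAt (fun w : ℝ => -(a * k * w)) (-(a * k)) w := by
      simpa [mul_assoc] using (hasDerivAt_id w).const_mul (-(a * k))
    simpa [mul_comm] using h.exp
  have hD' : ∀ w : ℝ, HasDerivAt (fun w : ℝ => k⁻¹ + Real.exp (-(a * k * w)))
      (-(a * k) * Real.exp (-(a * k * w))) w := fun w => (hE' w).const_add _
  have hν1 : ∀ w : ℝ, HasDerivAt ν
      (k * Real.exp (-(a * k * w)) / (k⁻¹ + Real.exp (-(a * k * w)))) w := by
    intro w
    have h := ((hD' w).log (hD w).ne').const_mul (-(1 / a))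
    refine h.congr_deriv ?_
    field_simp
  have hdν : deriv ν = fun w => k * Real.exp (-(a * k * w)) / (k⁻¹ + Real.exp (-(a * k * w))) :=
    funext fun w => (hν1 w).deriv
  have hν2 : ∀ w : ℝ, HasDerivAt
      (fun w => k * Real.exp (-(a * k * w)) / (k⁻¹ + Real.exp (-(a * k * w))))
      (-(a * k * Real.exp (-(a * k * w))) / (k⁻¹ + Real.exp (-(a * k * w))) ^ 2) w := by
    intro w
    have h := ((hE' w).const_mul k).div (hD' w) (hD w).ne'
    refine h.congr_deriv ?_
    have h1 := (hD w).ne'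
    field_simp
    ring
  have hdν2 : deriv (deriv ν)
      = fun w => -(a * k * Real.exp (-(a * k * w))) / (k⁻¹ + Real.exp (-(a * k * w))) ^ 2 := by
    rw [hdν]; exact funext fun w => (hν2 w).deriv
  have hgdef : ∀ w : ℝ, g w = deriv (deriv ν) w / deriv ν w := fun _ => rfl
  have hg : g = fun w => -a / (k⁻¹ + Real.exp (-(a * k * w))) := by
    funext w
    rw [hgdef w, hdν2, hdν]
    have h1 := (hD w).ne'
    have h2 := (hEpos w).ne'
    field_simp
  have hg' : HasDerivAt g
      (-(a ^ 2 * k * Real.exp (-(a * k * v))) / (k⁻¹ + Real.exp (-(a * k * v))) ^ 2) v := by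
    rw [hg]
    have h := ((hD' v).inv (hD v).ne').const_mul (-a)
    have hfun : (fun w => -a / (k⁻¹ + Real.exp (-(a * k * w))))
        = fun w => -a * (k⁻¹ + Real.exp (-(a * k * w)))⁻¹ := by
      funext w; rw [div_eq_mul_inv]
    rw [hfun]
    refine h.congr_deriv ?_
    ring
  have hdg : deriv g v
      = -(a ^ 2 * k * Real.exp (-(a * k * v))) / (k⁻¹ + Real.exp (-(a * k * v))) ^ 2 :=
    hg'.deriv
  have hDv := (hD v).ne'
  have heq : (1 / 2) * (deriv g v + deriv (deriv ν) v) * x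
          + (γ / (2 * (1 - γ))) * deriv (deriv ν) v * y
        = -((a * k * Real.exp (-(a * k * v))) / (k⁻¹ + Real.exp (-(a * k * v))) ^ 2)
            * (((a + 1) / 2) * x + (γ / (2 * (1 - γ))) * y) := by
    have hγne : (1:ℝ) - γ ≠ 0 := by nlinarith
    simp only [hdg, hdν2]
    field_simp
    ring
  refine ⟨heq, ?_, ?_⟩
  · rw [heq]
    have hF : 0 < (a * k * Real.exp (-(a * k * v))) / (k⁻¹ + Real.exp (-(a * k * v))) ^ 2 := by
      have := hD v; positivity
    have hS : 0 ≤ ((a + 1) / 2) * x + (γ / (2 * (1 - γ))) * y := by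
      have hc : 0 < γ / (2 * (1 - γ)) := by
        apply div_pos hγ0; nlinarith
      nlinarith
    nlinarith
  · intro hxy
    rw [heq]
    have hF : 0 < (a * k * Real.exp (-(a * k * v))) / (k⁻¹ + Real.exp (-(a * k * v))) ^ 2 := by
      have := hD v; positivity
    have hc : 0 < γ / (2 * (1 - γ)) := by
      apply div_pos hγ0; nlinarith
    have hS : 0 < ((a + 1) / 2) * x + (γ / (2 * (1 - γ))) * y := by
      rcases hxy with h | h
      · nlinarith
      · nlinarith
    nlinarith
end
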